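/- Let A₀ be an invertible operator on a finite-dimensional Hilbert space E and consider the block operator N = i·[[2I + izA₀ - A₀, izA₀ - A₀],[A₀, A₀ + 2I]] on E ⊕ E. Then N is invertible if and only if 2i/z is not an eigenvalue of A₀ (equivalently, ker(2A₀^{-1} + izI) = {0}). -/

import Mathlib

open Matrix

theorem stmt_16 {n : ℕ} (A₀ : Matrix (Fin n) (Fin n) ℂ) (hA : IsUnit A₀)
    (z : ℂ) (hz : z ≠ 0)
    (N : Matrix (Fin n ⊕ Fin n) (Fin n ⊕ Fin n) ℂ)
    (hN : N = Complex.I •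
      Matrix.fromBlocks ((2 : ℂ) • 1 + (Complex.I * z) • A₀ - A₀)
        ((Complex.I * z) • A₀ - A₀) A₀ (A₀ + (2 : ℂ) • 1)) :
    IsUnit N ↔ ¬ ∃ x : Fin n → ℂ, x ≠ 0 ∧ A₀.mulVec x = (2 * Complex.I / z) • x := by
  set c : ℂ := 2 * Complex.I / z with hc
  set B := Matrix.fromBlocks ((2 : ℂ) • 1 + (Complex.I * z) • A₀ - A₀)
        ((Complex.I * z) • A₀ - A₀) A₀ (A₀ + (2 : ℂ) • 1) with hB
  have hL : (Matrix.fromBlocks 1 0 1 1 : Matrix (Fin n ⊕ Fin n) (Fin n ⊕ Fin n) ℂ).det = 1 := by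
    rw [Matrix.det_fromBlocks_zero₁₂]; simp
  have hE : (Matrix.fromBlocks 1 0 (-1) 1 : Matrix (Fin n ⊕ Fin n) (Fin n ⊕ Fin n) ℂ).det = 1 := by
    rw [Matrix.det_fromBlocks_zero₁₂]; simp
  have hmul : (Matrix.fromBlocks 1 0 1 1) * B * (Matrix.fromBlocks 1 0 (-1) 1)
      = Matrix.fromBlocks ((2:ℂ) • 1) ((Complex.I * z) • A₀ - A₀) 0
          ((Complex.I * z) • A₀ + (2:ℂ) • 1) := by
    rw [hB, Matrix.fromBlocks_multiply, Matrix.fromBlocks_multiply]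
    refine Matrix.fromBlocks_inj.mpr ⟨?_, ?_, ?_, ?_⟩ <;> simp <;> abel
  have hscal : Complex.I * z * c = -2 := by
    rw [hc]; field_simp; linear_combination Complex.I_sq
  have hfact : (Complex.I * z) • A₀ + (2:ℂ) • 1 = (Complex.I * z) • (A₀ - c • 1) := by
    rw [smul_sub, smul_smul, hscal]
    simp [sub_neg_eq_add]
  have hdetB : B.det = (2:ℂ)^n * ((Complex.I * z)^n * (A₀ - c • 1).det) := by
    have h1 : ((Matrix.fromBlocks 1 0 1 1) * B * (Matrix.fromBlocks 1 0 (-1) 1)).det = B.det := by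
      rw [Matrix.det_mul, Matrix.det_mul, hL, hE]; ring
    rw [← h1, hmul, Matrix.det_fromBlocks_zero₂₁, hfact, Matrix.det_smul, Matrix.det_smul]
    simp
  have hdetN : N.det = Complex.I ^ (n + n) * ((2:ℂ)^n * ((Complex.I * z)^n * (A₀ - c • 1).det)) := by
    rw [hN, Matrix.det_smul, hdetB]
    congr 1
    simp [Fintype.card_sum]
  have hR : (∃ x : Fin n → ℂ, x ≠ 0 ∧ A₀.mulVec x = c • x) ↔ (A₀ - c • 1).det = 0 := by
    rw [← Matrix.exists_mulVec_eq_zero_iff]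
    constructor
    · rintro ⟨x, hx, he⟩
      exact ⟨x, hx, by rw [Matrix.sub_mulVec, he, Matrix.smul_mulVec, Matrix.one_mulVec, sub_self]⟩
    · rintro ⟨x, hx, he⟩
      refine ⟨x, hx, ?_⟩
      rw [Matrix.sub_mulVec, sub_eq_zero] at he
      rw [he, Matrix.smul_mulVec, Matrix.one_mulVec]
  rw [Matrix.isUnit_iff_isUnit_det, isUnit_iff_ne_zero, hdetN, hR]
  have h2 : (2:ℂ) ≠ 0 := two_ne_zero
  have hIz : Complex.I * z ≠ 0 := mul_ne_zero Complex.I_ne_zero hz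
  constructor
  · intro h hd
    exact h (by rw [hd]; ring)
  · intro h hd
    apply h
    by_contra hne
    exact (mul_ne_zero (pow_ne_zero (n+n) Complex.I_ne_zero)
      (mul_ne_zero (pow_ne_zero n h2) (mul_ne_zero (pow_ne_zero n hIz) hne))) hd
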